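/- Let T be a clique tree of a finite simple graph G, rooted at a node C_r. For each node C of T and each vertex x ∈ V_G ∖ V(C), either x is adjacent in G to every vertex of f(C), or x is adjacent in G to no vertex of f(C). -/

import Mathlib

variable {V : Type*}

/-- The closed neighborhood `N[x]` of a vertex. -/
def closedNbhd (G : SimpleGraph V) (x : V) : Set V := insert x (G.neighborSet x)

/-- `N[S] = ⋃ x ∈ S, N[x]`. -/
def closedNbhdSet (G : SimpleGraph V) (S : Set V) : Set V := ⋃ x ∈ S, closedNbhd G x

/-- `D` is a dominating set: `N[D] = V`. -/
def IsDomSet (G : SimpleGraph V) (D : Set V) : Prop := closedNbhdSet G D = Set.univ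

/-- Minimal dominating set: dominating, and no proper subset dominates. -/
def IsMinDomSet (G : SimpleGraph V) (D : Set V) : Prop :=
  IsDomSet G D ∧ ∀ D' : Set V, D' ⊂ D → ¬ IsDomSet G D'

/-- Private neighbors of `x` with respect to `D`: `P(D,x) = {y : N[y] ∩ D = {x}}`. -/
def privNbrs (G : SimpleGraph V) (D : Set V) (x : V) : Set V :=
  {y | closedNbhd G y ∩ D = {x}}

/-- Irredundant set: every member has a private neighbor. -/
def IsIrredundant (G : SimpleGraph V) (D : Set V) : Prop :=
  ∀ x ∈ D, (privNbrs G D x).Nonempty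

/-- Maximal clique. -/
def IsMaxClique (G : SimpleGraph V) (C : Set V) : Prop :=
  G.IsClique C ∧ ∀ D : Set V, G.IsClique D → C ⊆ D → C = D

/-- The type of maximal cliques of `G`. -/
abbrev MaxClique (G : SimpleGraph V) := {C : Set V // IsMaxClique G C}

/-- A clique tree of `G`, rooted at `root`: a rooted tree whose nodes are exactly the
maximal cliques of `G` (encoded by a parent function from which every node reaches the
root), such that for each vertex `x` the nodes containing `x` induce a connected
subtree of the tree. -/
structure CliqueTree (G : SimpleGraph V) where
  parent : MaxClique G → MaxClique G
  root : MaxClique G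
  parent_root : parent root = root
  reaches_root : ∀ C : MaxClique G, ∃ n : ℕ, parent^[n] C = root
  vertex_subtree : ∀ x : V,
    ((SimpleGraph.fromRel fun C C' : MaxClique G => parent C = C').induce
      {C : MaxClique G | x ∈ C.1}).Connected

variable {G : SimpleGraph V}

open Classical in
/-- `f(C) := C ∖ Pa(C)` for non-root `C`, and `f(C_r) := C_r`. -/
noncomputable def fC (T : CliqueTree G) (C : MaxClique G) : Set V :=
  if C = T.root then C.1 else C.1 \ (T.parent C).1

/-- `IsAnc T A B` : `A` is an ancestor of `B` (i.e. `B ⪯ A`), namely `A` lies on the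
path from the root to `B`. -/
def IsAnc (T : CliqueTree G) (A B : MaxClique G) : Prop :=
  ∃ n : ℕ, T.parent^[n] B = A

/-- `V(C) := ⋃_{C' ⪯ C} f(C')`. -/
noncomputable def Vsub (T : CliqueTree G) (C : MaxClique G) : Set V :=
  ⋃ C' ∈ {C' : MaxClique G | IsAnc T C C'}, fC T C'


/-- Every clique is contained in a maximal clique (finite case). -/
lemma exists_maxClique_superset {V : Type*} [Fintype V] (G : SimpleGraph V)
    {S : Set V} (hS : G.IsClique S) : ∃ M : Set V, IsMaxClique G M ∧ S ⊆ M := by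
  classical
  have hfin : {D : Set V | G.IsClique D ∧ S ⊆ D}.Finite := Set.toFinite _
  obtain ⟨M, hM, hmax⟩ :=
    Set.Finite.exists_maximalFor id _ hfin ⟨S, hS, subset_rfl⟩
  exact ⟨M, ⟨hM.1, fun D hD hMD => Set.Subset.antisymm hMD (hmax ⟨hD, hM.2.trans hMD⟩ hMD)⟩, hM.2⟩

/-- Along a walk in the `y`-subtree, if `y ∉ parent C`, descendance from `C` is
preserved. -/
lemma walk_anc {G : SimpleGraph V} (T : CliqueTree G) (C : MaxClique G)
    {y : V} (hy : y ∉ (T.parent C).1)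
    {u v : {D : MaxClique G | y ∈ D.1}}
    (w : ((SimpleGraph.fromRel fun A B : MaxClique G => T.parent A = B).induce
      {D : MaxClique G | y ∈ D.1}).Walk u v)
    (hu : IsAnc T C u.1) : IsAnc T C v.1 := by
  induction w with
  | nil => exact hu
  | @cons a b c h p ih =>
    apply ih
    have hadj : a.1 ≠ b.1 ∧ (T.parent a.1 = b.1 ∨ T.parent b.1 = a.1) := by
      simpa [SimpleGraph.fromRel_adj] using h
    obtain ⟨k, hk⟩ := hu
    rcases hadj.2 with hab | hba
    · rcases k with _ | k
      · exfalso
        simp only [Function.iterate_zero, id] at hk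
        exact hy (by rw [← hk, hab]; exact b.2)
      · refine ⟨k, ?_⟩
        rw [← hab, ← Function.iterate_succ_apply]
        exact hk
    · exact ⟨k + 1, by rw [Function.iterate_succ_apply, hba, hk]⟩

/-- If `y ∈ f(C)` then every maximal clique containing `y` is a descendant of `C`. -/
lemma isAnc_of_mem_fC {G : SimpleGraph V} (T : CliqueTree G) (C M : MaxClique G)
    {y : V} (hy : y ∈ fC T C) (hyM : y ∈ M.1) : IsAnc T C M := by
  by_cases hroot : C = T.root
  · subst hroot; exact T.reaches_root M
  · have hyC : y ∈ C.1 ∧ y ∉ (T.parent C).1 := by simpa [fC, hroot] using hy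
    obtain ⟨w⟩ := (T.vertex_subtree y) ⟨C, hyC.1⟩ ⟨M, hyM⟩
    exact walk_anc T C hyC.2 w ⟨0, rfl⟩

/-- If `x ∉ V(C)`, `x ∈ M` and `M` is a descendant of `C`, then `x ∈ C`. -/
lemma mem_of_chain {G : SimpleGraph V} (T : CliqueTree G)
    (C M : MaxClique G) {x : V} (hx : x ∉ Vsub T C) (hxM : x ∈ M.1)
    {n : ℕ} (hn : T.parent^[n] M = C) : x ∈ C.1 := by
  have key : ∀ i, i ≤ n → x ∈ (T.parent^[i] M).1 := by
    intro i
    induction i with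
    | zero => intro _; exact hxM
    | succ i ih =>
      intro hi
      have hiD : x ∈ (T.parent^[i] M).1 := ih (Nat.le_of_succ_le hi)
      rw [Function.iterate_succ_apply']
      by_cases hroot : T.parent^[i] M = T.root
      · rw [hroot, T.parent_root, ← hroot]; exact hiD
      · by_contra hxp
        apply hx
        have hfCmem : x ∈ fC T (T.parent^[i] M) := by
          simp only [fC, if_neg hroot]
          exact ⟨hiD, hxp⟩
        have hanc : IsAnc T C (T.parent^[i] M) := by
          refine ⟨n - i, ?_⟩
          rw [← Function.iterate_add_apply]
          rw [Nat.sub_add_cancel (Nat.le_of_succ_le hi)]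
          exact hn
        exact Set.mem_biUnion hanc hfCmem
  have := key n le_rfl
  rwa [hn] at this

/-- For each node `C` of the clique tree and each `x ∈ V_G ∖ V(C)`, either `x` is
adjacent to every vertex of `f(C)`, or to none. -/
theorem stmt2 {V : Type*} [Fintype V] (G : SimpleGraph V) (T : CliqueTree G)
    (C : MaxClique G) (x : V) (hx : x ∉ Vsub T C) :
    (∀ y ∈ fC T C, G.Adj x y) ∨ (∀ y ∈ fC T C, ¬ G.Adj x y) := by
  classical
  by_cases hxC : x ∈ C.1
  · left
    intro y hy
    have hyV : y ∈ Vsub T C := Set.mem_biUnion (⟨0, rfl⟩ : IsAnc T C C) hy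
    have hxy : x ≠ y := fun h => hx (h ▸ hyV)
    have hyC : y ∈ C.1 := by
      by_cases h : C = T.root
      · simpa [fC, h] using hy
      · exact ((by simpa [fC, h] using hy : y ∈ C.1 \ (T.parent C).1)).1
    exact C.2.1 hxC hyC hxy
  · right
    intro y hy hadj
    have hpair : G.IsClique {x, y} := by
      intro a ha b hb hab
      simp only [Set.mem_insert_iff, Set.mem_singleton_iff] at ha hb
      rcases ha with rfl | rfl <;> rcases hb with rfl | rfl <;>
        first | exact absurd rfl hab | exact hadj | exact hadj.symm
    obtain ⟨M, hM, hsub⟩ := exists_maxClique_superset G hpair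
    have hxM : x ∈ M := hsub (by simp)
    have hyM : y ∈ M := hsub (by simp)
    obtain ⟨n, hn⟩ := isAnc_of_mem_fC T C ⟨M, hM⟩ hy hyM
    exact hxC (mem_of_chain T C ⟨M, hM⟩ hx hxM hn)
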